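/- Let F be a field of characteristic zero with algebraic closure F̄, and let A be an F-subspace of M_n(F) of dimension n−1. Suppose there exist a nonzero vector x₁ ∈ F̄^n and linear functionals λ₁, ..., λ_{n−1} on F̄^n with λ_j(x₁) = 0 for all j, such that the rank-one matrices x₁⊗λ₁, ..., x₁⊗λ_{n−1} (where (x⊗λ)(z) = λ(z)x, i.e., the matrix with (i,j) entry (x)_i λ(e_j)) are linearly independent over F̄ and span the F̄-span of the image of A in M_n(F̄) under the entrywise embedding F → F̄. Then A is F-conjugate to the span of the matrices E_{n,i}, i = 1, ..., n−1: there exists g ∈ GL(n,F) such that g A g^{-1} equals the F-span of {E_{n,1}, ..., E_{n,n-1}}. -/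

import Mathlib

open Matrix

section Aux

lemma conj_vecMulVec {R : Type*} [CommRing R] {n : Type*} [Fintype n]
    (M N : Matrix n n R) (v w : n → R) :
    M * Matrix.vecMulVec v w * N = Matrix.vecMulVec (M *ᵥ v) (w ᵥ* N) := by
  ext i j
  simp only [Matrix.mul_apply, Matrix.vecMulVec_apply, Matrix.mulVec, Matrix.vecMul,
    dotProduct, Finset.sum_mul, Finset.mul_sum]
  apply Finset.sum_congr rfl
  intro k _
  apply Finset.sum_congr rfl
  intro l _
  ring

lemma exists_equiv {F : Type*} [Field F] {n : ℕ} (v : Fin n → F) (hv : v ≠ 0) (j0 : Fin n) :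
    ∃ u : (Fin n → F) ≃ₗ[F] (Fin n → F), u v = Pi.single j0 1 := by
  classical
  have hli : LinearIndepOn F id ({v} : Set (Fin n → F)) :=
    (linearIndepOn_singleton_iff F).mpr hv
  let b := Module.Basis.extend hli
  haveI : Fintype ↥(hli.extend (Set.subset_univ _)) := FiniteDimensional.fintypeBasisIndex b
  have hcard : Fintype.card (Fin n) = Fintype.card ↥(hli.extend (Set.subset_univ _)) := by
    rw [← Module.finrank_eq_card_basis b, Module.finrank_pi, Fintype.card_fin]
  have hvmem : v ∈ hli.extend (Set.subset_univ _) :=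
    Module.Basis.subset_extend hli (Set.mem_singleton v)
  let vt : ↥(hli.extend (Set.subset_univ _)) := ⟨v, hvmem⟩
  let σ0 := Fintype.equivOfCardEq hcard
  let σ := σ0.trans (Equiv.swap (σ0 j0) vt)
  let b' := b.reindex σ.symm
  have hσ : σ j0 = vt := by simp [σ, Equiv.swap_apply_left]
  have hb' : b' j0 = v := by
    rw [Module.Basis.reindex_apply, Equiv.symm_symm, hσ]
    exact Module.Basis.extend_apply_self hli vt
  refine ⟨b'.equiv (Pi.basisFun F (Fin n)) (Equiv.refl _), ?_⟩
  rw [← hb', Module.Basis.equiv_apply, Equiv.refl_apply, Pi.basisFun_apply]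

lemma mem_T {F : Type*} [Field F] {n : ℕ} (hn : 0 < n) (w' : Fin n → F)
    (hw' : w' ⟨n - 1, by omega⟩ = 0) :
    Matrix.vecMulVec (Pi.single (⟨n - 1, by omega⟩ : Fin n) 1) w' ∈
      Submodule.span F (Set.range fun i : Fin (n - 1) =>
        Matrix.single (⟨n - 1, by omega⟩ : Fin n) (Fin.castLE (Nat.sub_le n 1) i) (1 : F)) := by
  classical
  rw [Submodule.mem_span_range_iff_exists_fun]
  refine ⟨fun i => w' (Fin.castLE (Nat.sub_le n 1) i), ?_⟩
  ext i j
  rw [Matrix.sum_apply]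
  simp only [Matrix.smul_apply, Matrix.single, Matrix.of_apply, smul_eq_mul,
    mul_ite, mul_one, mul_zero, Matrix.vecMulVec_apply]
  by_cases hi : (⟨n - 1, by omega⟩ : Fin n) = i
  · subst hi
    rw [Pi.single_eq_same, one_mul]
    by_cases hj : (⟨n - 1, by omega⟩ : Fin n) = j
    · subst hj
      rw [hw', Finset.sum_eq_zero]
      intro k _
      rw [if_neg]
      rintro ⟨-, hk⟩
      have h1 := k.isLt
      have h3 : (Fin.castLE (Nat.sub_le n 1) k : Fin n).val = n - 1 := by rw [hk]
      have h2 : (Fin.castLE (Nat.sub_le n 1) k : Fin n).val = (k : ℕ) := rfl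
      omega
    · have hjlt : (j : ℕ) < n - 1 := by
        have h1 := j.isLt
        have h2 : (j : ℕ) ≠ n - 1 := fun h => hj (Fin.ext (by simp [h]))
        omega
      rw [Finset.sum_eq_single (⟨(j : ℕ), hjlt⟩ : Fin (n - 1))]
      · rw [if_pos ⟨rfl, Fin.ext rfl⟩]
        exact congrArg w' (Fin.ext rfl)
      · intro k _ hk
        rw [if_neg]
        rintro ⟨-, hkj⟩
        exact hk (Fin.ext (by simpa using congrArg Fin.val hkj))
      · exact fun h => absurd (Finset.mem_univ _) h
  · rw [Pi.single_eq_of_ne (fun h => hi h.symm), zero_mul, Finset.sum_eq_zero]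
    intro k _
    rw [if_neg]
    rintro ⟨h, -⟩
    exact hi h

lemma finrank_T {F : Type*} [Field F] {n : ℕ} (hn : 0 < n) :
    Module.finrank F (Submodule.span F (Set.range fun i : Fin (n - 1) =>
      Matrix.single (⟨n - 1, by omega⟩ : Fin n) (Fin.castLE (Nat.sub_le n 1) i) (1 : F)))
      = n - 1 := by
  classical
  have hinj : Function.Injective (fun i : Fin (n - 1) =>
      ((⟨n - 1, by omega⟩ : Fin n), Fin.castLE (Nat.sub_le n 1) i)) := by
    intro a b hab
    have := congrArg Prod.snd hab
    exact Fin.ext (by simpa using congrArg Fin.val this)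
  have hind : LinearIndependent F (fun i : Fin (n - 1) =>
      Matrix.single (⟨n - 1, by omega⟩ : Fin n) (Fin.castLE (Nat.sub_le n 1) i) (1 : F)) := by
    have h := ((Matrix.stdBasis F (Fin n) (Fin n)).linearIndependent).comp _ hinj
    convert h using 1
    funext i
    rw [Function.comp_apply, Matrix.stdBasis_eq_single]
  rw [finrank_span_eq_card hind, Fintype.card_fin]

def conjE {R A : Type*} [CommSemiring R] [Semiring A] [Algebra R A] (g : Aˣ) : A ≃ₗ[R] A where
  toFun a := ↑g * a * ↑g⁻¹
  invFun a := ↑g⁻¹ * a * ↑g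
  map_add' a b := by rw [mul_add, add_mul]
  map_smul' r a := by rw [Algebra.mul_smul_comm, Algebra.smul_mul_assoc, RingHom.id_apply]
  left_inv a := by
    dsimp only
    simp only [← mul_assoc]
    rw [Units.inv_mul, one_mul, mul_assoc, Units.inv_mul, mul_one]
  right_inv a := by
    dsimp only
    simp only [← mul_assoc]
    rw [Units.mul_inv, one_mul, mul_assoc, Units.mul_inv, mul_one]

@[simp] lemma conjE_apply {R A : Type*} [CommSemiring R] [Semiring A] [Algebra R A] (g : Aˣ)
    (a : A) : conjE (R := R) g a = ↑g * a * ↑g⁻¹ := rfl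

end Aux

/-- Wallach, case b: Let `A ⊆ Mₙ(F)` be an `F`-subspace of
dimension `n-1` whose `F̄`-span has a basis of rank-one matrices
`x₁⊗λ₁, …, x₁⊗λₙ₋₁` with `x₁ ≠ 0` and `λⱼ(x₁) = 0`.  Then `A` is `F`-conjugate
to the span of the matrices `E_{n,i}`, `i = 1, …, n-1`. -/
theorem stmt15 (F : Type*) [Field F] [CharZero F] (n : ℕ) (hn : 0 < n)
    (A : Submodule F (Matrix (Fin n) (Fin n) F))
    (hdim : Module.finrank F A = n - 1)
    (x : Fin n → AlgebraicClosure F) (hx : x ≠ 0)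
    (lam : Fin (n - 1) → ((Fin n → AlgebraicClosure F) →ₗ[AlgebraicClosure F] AlgebraicClosure F))
    (hlam : ∀ j, lam j x = 0)
    (B : Fin (n - 1) → Matrix (Fin n) (Fin n) (AlgebraicClosure F))
    (hB : ∀ j, B j = Matrix.of fun i k => x i * lam j (Pi.single k 1))
    (hind : LinearIndependent (AlgebraicClosure F) B)
    (hspan : Submodule.span (AlgebraicClosure F) (Set.range B)
        = Submodule.span (AlgebraicClosure F)
            ((fun M : Matrix (Fin n) (Fin n) F =>
              M.map (algebraMap F (AlgebraicClosure F))) '' (A : Set (Matrix (Fin n) (Fin n) F)))) :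
    ∃ g : (Matrix (Fin n) (Fin n) F)ˣ,
      (fun a => (↑g : Matrix (Fin n) (Fin n) F) * a * (↑g⁻¹ : Matrix (Fin n) (Fin n) F)) ''
          (A : Set (Matrix (Fin n) (Fin n) F))
        = ↑(Submodule.span F (Set.range fun i : Fin (n - 1) =>
            Matrix.single (⟨n - 1, by omega⟩ : Fin n) (Fin.castLE (Nat.sub_le n 1) i) (1 : F))) := by
  classical
  have hπinj : Function.Injective (algebraMap F (AlgebraicClosure F)) :=
    RingHom.injective _
  by_cases h1 : n = 1
  · subst h1
    have hA : A = ⊥ := by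
      have := Submodule.finrank_eq_zero (S := A)
      exact this.mp (by simpa using hdim)
    refine ⟨1, ?_⟩
    rw [hA]
    haveI : IsEmpty (Fin (1 - 1)) := ⟨fun i => absurd i.isLt (by omega)⟩
    have hr : (Set.range fun i : Fin (1 - 1) =>
        Matrix.single (⟨1 - 1, by omega⟩ : Fin 1) (Fin.castLE (Nat.sub_le 1 1) i) (1 : F))
        = ∅ := Set.range_eq_empty _
    rw [hr, Submodule.span_empty]
    simp
  -- now n ≥ 2
  have hn2 : 2 ≤ n := by omega
  have hx_expand : ∀ (j : Fin (n - 1)) (z : Fin n → AlgebraicClosure F),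
      (∑ k, z k * lam j (Pi.single k 1)) = lam j z := by
    intro j z
    have hz : z = ∑ k, z k • (Pi.single k 1 : Fin n → AlgebraicClosure F) := by
      funext t
      rw [Finset.sum_apply]
      simp [Pi.single_apply, eq_comm]
    conv_rhs => rw [hz]
    rw [map_sum]
    apply Finset.sum_congr rfl
    intro k _
    rw [_root_.map_smul, smul_eq_mul]
  have stepA : ∀ a ∈ A, ∃ m : Fin n → AlgebraicClosure F,
      (∀ i k, algebraMap F (AlgebraicClosure F) (a i k) = x i * m k)
        ∧ (∑ k, x k * m k) = 0 := by
    intro a ha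
    have hmem : a.map (algebraMap F (AlgebraicClosure F))
        ∈ Submodule.span (AlgebraicClosure F) (Set.range B) := by
      rw [hspan]
      exact Submodule.subset_span ⟨a, ha, rfl⟩
    obtain ⟨c, hc⟩ := (Submodule.mem_span_range_iff_exists_fun (AlgebraicClosure F)).mp hmem
    refine ⟨fun k => ∑ j, c j * lam j (Pi.single k 1), ?_, ?_⟩
    · intro i k
      have h2 := (Matrix.ext_iff.mpr hc) i k
      rw [Matrix.sum_apply] at h2
      rw [Matrix.map_apply] at h2
      rw [← h2, Finset.mul_sum]
      apply Finset.sum_congr rfl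
      intro j _
      rw [hB j]
      simp only [Matrix.smul_apply, Matrix.of_apply, smul_eq_mul]
      ring
    · have key : ∀ j : Fin (n - 1),
          (∑ k, x k * (c j * lam j (Pi.single k 1))) = c j * lam j x := by
        intro j
        rw [← hx_expand j x, Finset.mul_sum]
        apply Finset.sum_congr rfl
        intro k _
        ring
      calc (∑ k, x k * ∑ j, c j * lam j (Pi.single k 1))
          = ∑ k, ∑ j, x k * (c j * lam j (Pi.single k 1)) := by
            apply Finset.sum_congr rfl
            intro k _
            rw [Finset.mul_sum]
        _ = ∑ j, ∑ k, x k * (c j * lam j (Pi.single k 1)) := Finset.sum_comm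
        _ = ∑ j, c j * lam j x := Finset.sum_congr rfl (fun j _ => key j)
        _ = 0 := by simp [hlam]
  -- Step B : find v
  have hAne : A ≠ ⊥ := by
    intro h
    rw [h, finrank_bot] at hdim
    omega
  obtain ⟨a0, ha0, ha0ne⟩ := Submodule.ne_bot_iff A |>.mp hAne
  obtain ⟨i1, k0, hne⟩ : ∃ i k, a0 i k ≠ 0 := by
    by_contra h
    push_neg at h
    exact ha0ne (by ext i k; simpa using h i k)
  obtain ⟨m0, hA0, hsum0⟩ := stepA a0 ha0
  have hπa0 : algebraMap F (AlgebraicClosure F) (a0 i1 k0) ≠ 0 :=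
    fun h => hne (hπinj (h.trans (map_zero _).symm))
  have hprod : x i1 * m0 k0 ≠ 0 := by rw [← hA0 i1 k0]; exact hπa0
  have hd : m0 k0 ≠ 0 := (mul_ne_zero_iff.mp hprod).2
  have hxi1 : x i1 ≠ 0 := (mul_ne_zero_iff.mp hprod).1
  set v : Fin n → F := fun i => a0 i k0 with hvdef
  have hπv : ∀ i, algebraMap F (AlgebraicClosure F) (v i) = x i * m0 k0 := fun i => hA0 i k0
  have hv : v ≠ 0 := fun h => hne (congrFun h i1)
  have hvi1 : v i1 ≠ 0 := hne
  -- Step C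
  have stepC : ∀ a ∈ A, ∃ w : Fin n → F, a = Matrix.vecMulVec v w ∧ w ⬝ᵥ v = 0 := by
    intro a ha
    obtain ⟨m, hAm, hsm⟩ := stepA a ha
    refine ⟨fun k => a i1 k / v i1, ?_, ?_⟩
    · ext i k
      rw [Matrix.vecMulVec_apply]
      apply hπinj
      rw [_root_.map_mul, map_div₀, hAm, hAm, hπv, hπv]
      field_simp
    · apply hπinj
      rw [map_zero, dotProduct, map_sum]
      rw [← hsm]
      apply Finset.sum_congr rfl
      intro k _
      rw [_root_.map_mul, map_div₀, hAm, hπv, hπv]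
      field_simp
  -- Step D
  obtain ⟨u, hu⟩ := exists_equiv v hv ⟨n - 1, by omega⟩
  have hcomp1 : u.toLinearMap ∘ₗ u.symm.toLinearMap = LinearMap.id := by ext z; simp
  have hcomp2 : u.symm.toLinearMap ∘ₗ u.toLinearMap = LinearMap.id := by ext z; simp
  set g : (Matrix (Fin n) (Fin n) F)ˣ :=
    ⟨LinearMap.toMatrix' u.toLinearMap, LinearMap.toMatrix' u.symm.toLinearMap,
      by rw [← LinearMap.toMatrix'_comp, hcomp1, LinearMap.toMatrix'_id],
      by rw [← LinearMap.toMatrix'_comp, hcomp2, LinearMap.toMatrix'_id]⟩ with hg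
  have hgv : (↑g : Matrix (Fin n) (Fin n) F) *ᵥ v = Pi.single (⟨n - 1, by omega⟩ : Fin n) 1 := by
    have h := Matrix.toLin'_apply (LinearMap.toMatrix' u.toLinearMap) v
    rw [Matrix.toLin'_toMatrix'] at h
    exact h.symm.trans hu
  let ψ : Matrix (Fin n) (Fin n) F ≃ₗ[F] Matrix (Fin n) (Fin n) F := conjE (R := F) g
  refine ⟨g, ?_⟩
  have himg : ((fun a => (↑g : Matrix (Fin n) (Fin n) F) * a * (↑g⁻¹ : Matrix (Fin n) (Fin n) F)) '' (A : Set _))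
      = (↑(Submodule.map ψ.toLinearMap A) : Set (Matrix (Fin n) (Fin n) F)) := by
    rw [Submodule.map_coe]
    rfl
  rw [himg]
  suffices h : Submodule.map ψ.toLinearMap A
      = Submodule.span F (Set.range fun i : Fin (n - 1) =>
          Matrix.single (⟨n - 1, by omega⟩ : Fin n)
            (Fin.castLE (Nat.sub_le n 1) i) (1 : F)) by
    rw [h]
  apply Submodule.eq_of_le_of_finrank_eq
  · rintro y hy
    obtain ⟨a, ha, rfl⟩ := Submodule.mem_map.mp hy
    obtain ⟨w, rfl, hw0⟩ := stepC a ha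
    have hconj : ψ.toLinearMap (Matrix.vecMulVec v w)
        = Matrix.vecMulVec ((↑g : Matrix (Fin n) (Fin n) F) *ᵥ v)
            (w ᵥ* (↑g⁻¹ : Matrix (Fin n) (Fin n) F)) := conj_vecMulVec _ _ _ _
    rw [hconj, hgv]
    apply mem_T hn
    have hz : (w ᵥ* (↑g⁻¹ : Matrix (Fin n) (Fin n) F)) ⬝ᵥ ((↑g : Matrix (Fin n) (Fin n) F) *ᵥ v) = 0 := by
      rw [Matrix.dotProduct_mulVec, Matrix.vecMul_vecMul]
      have hig : (↑g⁻¹ : Matrix (Fin n) (Fin n) F) * (↑g : Matrix (Fin n) (Fin n) F) = 1 := g.inv_mul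
      rw [hig, Matrix.vecMul_one]
      exact hw0
    rw [hgv, dotProduct_single, mul_one] at hz
    exact hz
  · have hfr := LinearEquiv.finrank_map_eq ψ A
    rw [hdim] at hfr
    exact hfr.trans (finrank_T hn).symm
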